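/- Let u₁, u₂, w₁, w₂, C be positive real constants. Suppose σ₁ > 0 and σ₂ > 0 satisfy w₁/σ₁ + w₂/σ₂ = C and minimize the function (τ₁, τ₂) ↦ u₁·w₁·τ₁² + u₂·w₂·τ₂² over all pairs (τ₁, τ₂) of positive reals with w₁/τ₁ + w₂/τ₂ = C. Then u₁·σ₁³ = u₂·σ₂³. -/

import Mathlib

/-- If `(σ₁, σ₂)` satisfies the tight time budget `w₁/σ₁ + w₂/σ₂ = C`
and minimizes `u₁ w₁ τ₁² + u₂ w₂ τ₂²` over all positive pairs `(τ₁, τ₂)` with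
`w₁/τ₁ + w₂/τ₂ = C`, then `u₁ σ₁³ = u₂ σ₂³`. -/
theorem stmt_8 (u1 u2 w1 w2 C σ1 σ2 : ℝ) (hu1 : 0 < u1) (hu2 : 0 < u2)
    (hw1 : 0 < w1) (hw2 : 0 < w2) (hC : 0 < C)
    (hσ1 : 0 < σ1) (hσ2 : 0 < σ2)
    (hfeas : w1 / σ1 + w2 / σ2 = C)
    (hmin : ∀ τ1 τ2 : ℝ, 0 < τ1 → 0 < τ2 → w1 / τ1 + w2 / τ2 = C →
      u1 * w1 * σ1 ^ 2 + u2 * w2 * σ2 ^ 2 ≤ u1 * w1 * τ1 ^ 2 + u2 * w2 * τ2 ^ 2) :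
    u1 * σ1 ^ 3 = u2 * σ2 ^ 3 := by
  set f : ℝ → ℝ := fun x => u1 * w1 * x ^ 2 + u2 * w2 * (w2 / (C - w1 / x)) ^ 2 with hf
  have hD : C - w1 / σ1 = w2 / σ2 := by linarith
  have hDpos : 0 < C - w1 / σ1 := by rw [hD]; positivity
  -- local min
  have hloc : IsLocalMin f σ1 := by
    have hcont : ContinuousAt (fun x : ℝ => C - w1 / x) σ1 :=
      (continuousAt_const.sub (continuousAt_const.div continuousAt_id hσ1.ne'))
    have h1 : ∀ᶠ x in nhds σ1, 0 < C - w1 / x :=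
      hcont.eventually (eventually_gt_nhds hDpos)
    have h2 : ∀ᶠ x in nhds σ1, 0 < x := eventually_gt_nhds hσ1
    filter_upwards [h1, h2] with x hx1 hx2
    have hgpos : 0 < w2 / (C - w1 / x) := by positivity
    have hfeasx : w1 / x + w2 / (w2 / (C - w1 / x)) = C := by
      rw [div_div_cancel₀ hw2.ne']
      ring
    have := hmin x (w2 / (C - w1 / x)) hx2 hgpos hfeasx
    have hval : f σ1 = u1 * w1 * σ1 ^ 2 + u2 * w2 * σ2 ^ 2 := by
      have hww : w2 / (w2 / σ2) = σ2 := by field_simp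
      simp only [hf, hD, hww]
    calc f σ1 = u1 * w1 * σ1 ^ 2 + u2 * w2 * σ2 ^ 2 := hval
      _ ≤ _ := this
  -- derivative
  have hd1 : HasDerivAt (fun x : ℝ => C - w1 / x) (w1 / σ1 ^ 2) σ1 := by
    have := ((hasDerivAt_inv hσ1.ne').const_mul w1).const_sub C
    simpa [div_eq_mul_inv, neg_div, mul_div_assoc] using this
  have hd2 : HasDerivAt (fun x : ℝ => w2 / (C - w1 / x))
      ((0 * (C - w1 / σ1) - w2 * (w1 / σ1 ^ 2)) / (C - w1 / σ1) ^ 2) σ1 :=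
    (hasDerivAt_const σ1 w2).div hd1 hDpos.ne'
  have hd : HasDerivAt f
      (u1 * w1 * (2 * σ1) + u2 * w2 *
        (2 * (w2 / (C - w1 / σ1)) *
          ((0 * (C - w1 / σ1) - w2 * (w1 / σ1 ^ 2)) / (C - w1 / σ1) ^ 2))) σ1 := by
    have ha : HasDerivAt (fun x : ℝ => u1 * w1 * x ^ 2) (u1 * w1 * (2 * σ1)) σ1 := by
      simpa using ((hasDerivAt_pow 2 σ1).const_mul (u1 * w1))
    have hb := ((hd2.pow 2).const_mul (u2 * w2))
    have := ha.add hb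
    convert this using 1
    · rfl
    · rfl
    · rfl
    · push_cast
      ring
  have hzero := hloc.hasDerivAt_eq_zero hd
  rw [hD] at hzero
  have hσ2' : σ2 ≠ 0 := hσ2.ne'
  have hσ1' : σ1 ≠ 0 := hσ1.ne'
  have hww : w2 / (w2 / σ2) = σ2 := by field_simp
  rw [hww] at hzero
  have key : u1 * w1 * (2 * σ1) + u2 * w2 * (2 * σ2 * ((0 * (w2 / σ2) - w2 * (w1 / σ1 ^ 2)) / (w2 / σ2) ^ 2)) = 0 := hzero
  field_simp at key
  have hne : (2 * w1 * w2 ^ 2 : ℝ) ≠ 0 := by positivity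
  exact mul_left_cancel₀ hne (by linear_combination w2 ^ 2 * key)
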